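/- arXiv:2310.15755 — 3 statements merged into one kernel-verified Lean document; each statement's English description precedes it below -/
import Mathlib

section
/- Let r > e and define f(x) = r·x·e^{-x}. Set a = f(f(1)) and b = f(1). Then f maps the closed interval I = [a, b] into itself, f restricted to I is strictly increasing on [a, 1] and strictly decreasing on [1, b], and satisfies f(a) ≥ a, f(b) < b, and f(x) > x for all x ∈ (a, 1]. -/
private lemma stmt0_hderiv (r x : ℝ) :
    HasDerivAt (fun x => r * x * Real.exp (-x)) (r * (1 - x) * Real.exp (-x)) x := by
  have h1 : HasDerivAt (fun x : ℝ => r * x) r x := by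
    simpa using (hasDerivAt_id x).const_mul r
  have h2 : HasDerivAt (fun x : ℝ => Real.exp (-x)) (-Real.exp (-x)) x := by
    have h := (Real.hasDerivAt_exp (-x)).comp x (hasDerivAt_id x).neg
    simp at h
    exact h
  have : HasDerivAt (fun x => r * x * Real.exp (-x)) (r * Real.exp (-x) + r * x * -Real.exp (-x)) x :=
    h1.mul h2
  convert this using 1
  ring

/-- For r > e and f(x) = r·x·e^{-x}, with a = f(f(1)) and b = f(1):
f maps I = [a,b] into itself, is strictly increasing on [a,1],
strictly decreasing on [1,b], and satisfies f(a) ≥ a, f(b) < b,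
and f(x) > x for all x ∈ (a,1]. -/
theorem stmt_0 (r : ℝ) (hr : Real.exp 1 < r)
    (f : ℝ → ℝ) (hf : ∀ x, f x = r * x * Real.exp (-x))
    (a b : ℝ) (ha : a = f (f 1)) (hb : b = f 1) :
    Set.MapsTo f (Set.Icc a b) (Set.Icc a b) ∧
    StrictMonoOn f (Set.Icc a 1) ∧
    StrictAntiOn f (Set.Icc 1 b) ∧
    a ≤ f a ∧
    f b < b ∧
    ∀ x ∈ Set.Ioc a 1, x < f x := by
  have hfe : f = fun x => r * x * Real.exp (-x) := funext hf
  subst hfe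
  set F := fun x : ℝ => r * x * Real.exp (-x) with hF
  have hr0 : (0:ℝ) < r := lt_trans (Real.exp_pos 1) hr
  -- b = r * exp(-1)
  have hbval : b = r * Real.exp (-1) := by rw [hb]; simp [hF]
  have hb1 : 1 < b := by
    rw [hbval]
    have : Real.exp 1 * Real.exp (-1) < r * Real.exp (-1) :=
      mul_lt_mul_of_pos_right hr (Real.exp_pos _)
    calc (1:ℝ) = Real.exp 1 * Real.exp (-1) := by
          rw [← Real.exp_add]; norm_num
      _ < r * Real.exp (-1) := this
  have hb0 : 0 < b := lt_trans one_pos hb1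
  -- f(x) > x for 0 < x ≤ 1
  have hlt : ∀ x : ℝ, 0 < x → x ≤ 1 → x < F x := by
    intro x hx0 hx1
    have hex : Real.exp x < r := lt_of_le_of_lt (Real.exp_le_exp.2 hx1) hr
    have h1 : 1 < r * Real.exp (-x) := by
      have := mul_lt_mul_of_pos_right hex (Real.exp_pos (-x))
      rwa [← Real.exp_add, add_neg_cancel, Real.exp_zero] at this
    have : x * 1 < x * (r * Real.exp (-x)) := by
      exact mul_lt_mul_of_pos_left h1 hx0
    calc x = x * 1 := (mul_one x).symm
      _ < x * (r * Real.exp (-x)) := this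
      _ = F x := by simp [hF]; ring
  -- upper bound: F x ≤ b for all x
  have hub : ∀ x : ℝ, F x ≤ b := by
    intro x
    have h1 : x ≤ Real.exp (x - 1) := by
      have := Real.add_one_le_exp (x - 1); linarith
    have h2 : x * Real.exp (-x) ≤ Real.exp (-1) := by
      calc x * Real.exp (-x) ≤ Real.exp (x - 1) * Real.exp (-x) :=
            mul_le_mul_of_nonneg_right h1 (Real.exp_pos _).le
        _ = Real.exp (-1) := by rw [← Real.exp_add]; ring_nf
    calc F x = r * (x * Real.exp (-x)) := by simp [hF]; ring
      _ ≤ r * Real.exp (-1) := mul_le_mul_of_nonneg_left h2 hr0.le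
      _ = b := hbval.symm
  -- b > log r, hence F b < b
  have hfb : F b < b := by
    have hlogr : Real.log r < b := by
      rw [hbval]
      have h1 : Real.log r - 1 + 1 < Real.exp (Real.log r - 1) := by
        apply Real.add_one_lt_exp
        have : 1 < Real.log r := (Real.lt_log_iff_exp_lt hr0).2 hr
        intro h; rw [sub_eq_zero] at h; linarith
      have h2 : Real.exp (Real.log r - 1) = r * Real.exp (-1) := by
        rw [Real.exp_sub, Real.exp_log hr0, Real.exp_neg]
        field_simp
      linarith [h2 ▸ h1]
    have hex : r < Real.exp b := by
      have := Real.exp_lt_exp.2 hlogr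
      rwa [Real.exp_log hr0] at this
    have h1 : r * Real.exp (-b) < 1 := by
      have := mul_lt_mul_of_pos_right hex (Real.exp_pos (-b))
      rwa [← Real.exp_add, add_neg_cancel, Real.exp_zero] at this
    calc F b = b * (r * Real.exp (-b)) := by simp [hF]; ring
      _ < b * 1 := mul_lt_mul_of_pos_left h1 hb0
      _ = b := mul_one b
  have haval : a = F b := by rw [ha, hb]
  have ha0 : 0 < a := by
    rw [haval]
    have : 0 < b * Real.exp (-b) := mul_pos hb0 (Real.exp_pos _)
    simp only [hF]
    calc (0:ℝ) < r * (b * Real.exp (-b)) := mul_pos hr0 this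
      _ = r * b * Real.exp (-b) := by ring
  have hab : a ≤ b := haval ▸ hub b
  -- continuity
  have hcont : Continuous F := by
    apply Continuous.mul
    · exact (continuous_const.mul continuous_id)
    · exact Real.continuous_exp.comp continuous_neg
  -- strict mono on [a,1]
  have hmono : StrictMonoOn F (Set.Icc a 1) := by
    apply strictMonoOn_of_deriv_pos (convex_Icc a 1) hcont.continuousOn
    intro x hx
    rw [interior_Icc] at hx
    rw [(stmt0_hderiv r x).deriv]
    have : 0 < 1 - x := by linarith [hx.2]
    positivity
  -- strict anti on [1,b]
  have hanti : StrictAntiOn F (Set.Icc 1 b) := by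
    apply strictAntiOn_of_deriv_neg (convex_Icc 1 b) hcont.continuousOn
    intro x hx
    rw [interior_Icc] at hx
    rw [(stmt0_hderiv r x).deriv]
    have h1 : 1 - x < 0 := by linarith [hx.1]
    have := mul_pos (mul_pos hr0 (neg_pos.2 h1)) (Real.exp_pos (-x))
    nlinarith [Real.exp_pos (-x)]
  -- a ≤ F a
  have hfa : a ≤ F a := by
    by_cases h : a ≤ 1
    · exact (hlt a ha0 h).le
    · push_neg at h
      have := hanti.antitoneOn (Set.mem_Icc.2 ⟨h.le, hab⟩)
        (Set.mem_Icc.2 ⟨hb1.le, le_refl b⟩) hab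
      rwa [← haval] at this
  refine ⟨?_, hmono, hanti, hfa, hfb, ?_⟩
  · intro x hx
    rcases Set.mem_Icc.1 hx with ⟨hxa, hxb⟩
    refine Set.mem_Icc.2 ⟨?_, hub x⟩
    by_cases h : x ≤ 1
    · have ha1 : a ≤ 1 := le_trans hxa h
      have := hmono.monotoneOn (Set.mem_Icc.2 ⟨le_refl a, ha1⟩)
        (Set.mem_Icc.2 ⟨hxa, h⟩) hxa
      linarith [hfa]
    · push_neg at h
      have := hanti.antitoneOn (Set.mem_Icc.2 ⟨h.le, hxb⟩)
        (Set.mem_Icc.2 ⟨hb1.le, le_refl b⟩) hxb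
      rwa [← haval] at this
  · intro x hx
    exact hlt x (lt_trans ha0 hx.1) hx.2
end

section
/- Let β = 5 and define h(x) = λ·x·(x+1)^{-5} with m = 1/4. If λ > 3.052, then h maps the closed interval E = [h(h(m)), h(m)] into itself, h restricted to E is strictly increasing on [h(h(m)), m] and strictly decreasing on [m, h(m)], and satisfies h(h(h(m))) ≥ h(h(m)), h(h(m)) < h(m), and h(x) > x for all x ∈ (h(h(m)), m]. -/
section AuxStmt3

private lemma stmt3_mono_key (x y : ℝ) (hx : 0 ≤ x) (hxy : x < y) (hy : y ≤ 1/4) :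
    x * (y+1)^5 < y * (x+1)^5 := by
  have ha : (0:ℝ) < x + 1 := by linarith
  have hb : (0:ℝ) < y + 1 := by linarith
  have hab : x + 1 < y + 1 := by linarith
  have t1 : (x+1)*(x+1)^3 < (y+1)^4 := by
    nlinarith [pow_lt_pow_left₀ hab ha.le (n := 4) (by norm_num)]
  have t2 : (x+1)*((x+1)^2*(y+1)) < (y+1)^4 := by
    nlinarith [pow_lt_pow_left₀ hab ha.le (n := 3) (by norm_num), pow_pos hb 3]
  have t3 : (x+1)*((x+1)*(y+1)^2) < (y+1)^4 := by
    nlinarith [pow_lt_pow_left₀ hab ha.le (n := 2) (by norm_num), pow_pos hb 2, sq_nonneg (y+1)]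
  have t4 : (x+1)*(y+1)^3 < (y+1)^4 := by nlinarith [pow_pos hb 3]
  have h2 : y * ((x+1) * ((x+1)^3 + (x+1)^2*(y+1) + (x+1)*(y+1)^2 + (y+1)^3)) < (y+1)^4 := by
    have hsum : (x+1) * ((x+1)^3 + (x+1)^2*(y+1) + (x+1)*(y+1)^2 + (y+1)^3) < 4*(y+1)^4 := by
      nlinarith
    have hpos : 0 < (x+1) * ((x+1)^3 + (x+1)^2*(y+1) + (x+1)*(y+1)^2 + (y+1)^3) := by positivity
    nlinarith [pow_pos hb 4]
  nlinarith [mul_pos (show (0:ℝ) < y - x by linarith)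
    (show (0:ℝ) < (y+1)^4 - y * ((x+1) * ((x+1)^3 + (x+1)^2*(y+1) + (x+1)*(y+1)^2 + (y+1)^3))
      by linarith)]

private lemma stmt3_anti_key (x y : ℝ) (hx : 1/4 ≤ x) (hxy : x < y) :
    y * (x+1)^5 < x * (y+1)^5 := by
  have ha : (0:ℝ) < x + 1 := by linarith
  have hb : (0:ℝ) < y + 1 := by linarith
  have hab : x + 1 < y + 1 := by linarith
  have t1 : (x+1)^4 < (y+1)*(y+1)^3 := by
    nlinarith [pow_lt_pow_left₀ hab ha.le (n := 4) (by norm_num)]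
  have t2 : (x+1)^4 < (y+1)*((x+1)*(y+1)^2) := by
    nlinarith [pow_lt_pow_left₀ hab ha.le (n := 3) (by norm_num), pow_pos ha 3, pow_pos hb 3]
  have t3 : (x+1)^4 < (y+1)*((x+1)^2*(y+1)) := by
    nlinarith [pow_lt_pow_left₀ hab ha.le (n := 2) (by norm_num), pow_pos ha 2, pow_pos hb 2,
      sq_nonneg (x+1)]
  have t4 : (x+1)^4 < (y+1)*(x+1)^3 := by nlinarith [pow_pos ha 3]
  have h2 : (x+1)^4 < x * ((y+1)*((y+1)^3 + (x+1)*(y+1)^2 + (x+1)^2*(y+1) + (x+1)^3)) := by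
    have hsum : 4*(x+1)^4 < (y+1)*((y+1)^3 + (x+1)*(y+1)^2 + (x+1)^2*(y+1) + (x+1)^3) := by
      nlinarith
    have hpos : 0 < (y+1)*((y+1)^3 + (x+1)*(y+1)^2 + (x+1)^2*(y+1) + (x+1)^3) := by positivity
    nlinarith [pow_pos ha 4]
  nlinarith [mul_pos (show (0:ℝ) < y - x by linarith)
    (show (0:ℝ) < x * ((y+1)*((y+1)^3 + (x+1)*(y+1)^2 + (x+1)^2*(y+1) + (x+1)^3)) - (x+1)^4
      by linarith)]

end AuxStmt3

/-- For β = 5, h(x) = λ·x·(x+1)^{-5}, m = 1/4, and λ > 3.052: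
h maps E = [h(h(m)), h(m)] into itself, is strictly increasing on [h(h(m)), m],
strictly decreasing on [m, h(m)], and satisfies h(h(h(m))) ≥ h(h(m)),
h(h(m)) < h(m), and h(x) > x for all x ∈ (h(h(m)), m]. -/
theorem stmt_3 (lam : ℝ) (hlam : 3.052 < lam)
    (h : ℝ → ℝ) (hh : ∀ x, h x = lam * x * (x + 1) ^ (-5 : ℤ))
    (m : ℝ) (hm : m = 1 / 4)
    (E : Set ℝ) (hE : E = Set.Icc (h (h m)) (h m)) :
    Set.MapsTo h E E ∧
    StrictMonoOn h (Set.Icc (h (h m)) m) ∧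
    StrictAntiOn h (Set.Icc m (h m)) ∧
    h (h m) ≤ h (h (h m)) ∧
    h (h m) < h m ∧
    ∀ x ∈ Set.Ioc (h (h m)) m, x < h x := by
  subst hm hE
  have hlam0 : (0:ℝ) < lam := by norm_num at hlam ⊢; linarith
  -- rewrite h in division form
  have hev : ∀ x : ℝ, h x = lam * x / (x+1)^5 := by
    intro x
    rw [hh x, zpow_neg, ← zpow_natCast (x+1) 5]
    norm_num [div_eq_mul_inv]
  -- strict monotonicity on [0, 1/4]
  have mono : ∀ x y : ℝ, 0 ≤ x → x < y → y ≤ 1/4 → h x < h y := by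
    intro x y hx hxy hy
    rw [hev x, hev y]
    have ha : (0:ℝ) < (x+1)^5 := pow_pos (by linarith) 5
    have hb : (0:ℝ) < (y+1)^5 := pow_pos (by linarith) 5
    rw [div_lt_div_iff₀ ha hb]
    have key := stmt3_mono_key x y hx hxy hy
    nlinarith [mul_lt_mul_of_pos_left key hlam0]
  -- strict antitonicity on [1/4, ∞)
  have anti : ∀ x y : ℝ, 1/4 ≤ x → x < y → h y < h x := by
    intro x y hx hxy
    rw [hev x, hev y]
    have ha : (0:ℝ) < (x+1)^5 := pow_pos (by linarith) 5
    have hb : (0:ℝ) < (y+1)^5 := pow_pos (by linarith) 5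
    rw [div_lt_div_iff₀ hb ha]
    have key := stmt3_anti_key x y hx hxy
    nlinarith [mul_lt_mul_of_pos_left key hlam0]
  -- growth: if 0 < x and (x+1)^5 < lam then x < h x
  have hgrow : ∀ x : ℝ, 0 < x → (x+1)^5 < lam → x < h x := by
    intro x hx hx5
    rw [hev x]
    have ha : (0:ℝ) < (x+1)^5 := pow_pos (by linarith) 5
    rw [lt_div_iff₀ ha]
    nlinarith [mul_lt_mul_of_pos_left hx5 hx]
  -- M = h(1/4) > 1/4
  have hMval : h (1/4) = lam * (256/3125) := by
    rw [hev]; norm_num; ring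
  have hmM : (1:ℝ)/4 < h (1/4) := by
    rw [hMval]; norm_num at hlam ⊢; linarith
  have hMpos : (0:ℝ) < h (1/4) := by linarith
  -- L = h (h (1/4)) > 0
  have hLpos : (0:ℝ) < h (h (1/4)) := by
    rw [hev (h (1/4))]
    exact div_pos (mul_pos hlam0 hMpos) (pow_pos (by linarith) 5)
  -- the fixed point s - 1 with s = lam^(1/5)
  set s : ℝ := lam ^ ((5:ℝ)⁻¹) with hs_def
  have hs5 : s^5 = lam := by
    rw [hs_def, ← Real.rpow_natCast (lam ^ ((5:ℝ)⁻¹)) 5, ← Real.rpow_mul hlam0.le]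
    norm_num
  have hs54 : 5/4 < s := by
    by_contra hc
    push_neg at hc
    have h0 : (0:ℝ) ≤ s := Real.rpow_nonneg hlam0.le _
    have h1 := pow_le_pow_left₀ h0 hc 5
    rw [hs5] at h1
    norm_num at h1 hlam
    linarith
  have hspos : (0:ℝ) < s := by linarith
  have hfix : h (s - 1) = s - 1 := by
    rw [hev]
    have e1 : s - 1 + 1 = s := by ring
    rw [e1, hs5]
    field_simp
  -- s - 1 < h (1/4)
  have hsM : s - 1 < h (1/4) := by
    have := anti (1/4) (s-1) le_rfl (by linarith)
    rw [hfix] at this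
    exact this
  -- L < s - 1
  have hLs : h (h (1/4)) < s - 1 := by
    have := anti (s-1) (h (1/4)) (by linarith) hsM
    rw [hfix] at this
    exact this
  -- (L+1)^5 < lam
  have hL5 : (h (h (1/4)) + 1)^5 < lam := by
    have h1 : h (h (1/4)) + 1 < s := by linarith
    have h2 := pow_lt_pow_left₀ h1 (by linarith) (n := 5) (by norm_num)
    rw [hs5] at h2
    exact h2
  -- L < h L
  have hhL : h (h (1/4)) < h (h (h (1/4))) := hgrow _ hLpos hL5
  -- L < M
  have hLM : h (h (1/4)) < h (1/4) := anti (1/4) (h (1/4)) le_rfl hmM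
  refine ⟨?_, ?_, ?_, hhL.le, hLM, ?_⟩
  · -- MapsTo
    intro x hx
    obtain ⟨hx1, hx2⟩ := hx
    constructor
    · -- L ≤ h x
      rcases le_or_gt x (1/4) with hxm | hxm
      · rcases hx1.eq_or_lt with rfl | hlt
        · exact hhL.le
        · exact (hhL.trans (mono _ x hLpos.le hlt hxm)).le
      · rcases hx2.eq_or_lt with rfl | hlt
        · exact le_rfl
        · exact (anti x (h (1/4)) hxm.le hlt).le
    · -- h x ≤ M
      rcases lt_or_ge x (1/4) with hxm | hxm
      · exact (mono x (1/4) (by linarith) hxm le_rfl).le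
      · rcases hxm.eq_or_lt with rfl | hlt
        · exact le_rfl
        · exact (anti (1/4) x le_rfl hlt).le
  · -- StrictMonoOn on [L, 1/4]
    intro x hx y hy hxy
    exact mono x y (le_trans hLpos.le hx.1) hxy hy.2
  · -- StrictAntiOn on [1/4, M]
    intro x hx y hy hxy
    exact anti x y hx.1 hxy
  · -- x < h x on (L, 1/4]
    intro x hx
    have hx0 : 0 < x := lt_trans hLpos hx.1
    have hx5 : (x+1)^5 < lam := by
      have h1 : (x+1)^5 ≤ (5/4:ℝ)^5 := by
        apply pow_le_pow_left₀ (by linarith) (by linarith [hx.2])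
      have h2 : ((5:ℝ)/4)^5 < lam := by norm_num at hlam ⊢; linarith
      linarith
    exact hgrow x hx0 hx5
end

section
/- Let r > 9.549, define f(x) = r·x·e^{-x}, and set b = f(1) = r/e. Then the set Π = {x ∈ [1, b] : f(x) ∈ [1, b] and f(f(x)) = x} is the singleton {ln r}, where ln r is the unique fixed point of f on (0,∞). -/
open Real

lemma aux_log_lt : Real.log 9.549 < 2.256437 := by
  rw [Real.log_lt_iff_lt_exp (by norm_num)]
  have h := Real.sum_le_exp_of_nonneg (show (0:ℝ) ≤ 2.256437 by norm_num) 15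
  refine lt_of_lt_of_le ?_ h
  simp only [Finset.sum_range_succ, Finset.sum_range_zero]
  norm_num [Nat.factorial]

lemma aux_phi_mono : StrictMonoOn (fun u : ℝ => u + 2*u/(Real.exp u - 1)) (Set.Ioi 0) := by
  apply strictMonoOn_of_deriv_pos (convex_Ioi 0)
  · apply ContinuousOn.add continuousOn_id
    apply ContinuousOn.div (by fun_prop) (by fun_prop)
    intro u hu
    have : 1 < Real.exp u := Real.one_lt_exp_iff.mpr hu
    linarith
  · intro u hu
    rw [interior_Ioi] at hu
    have hu0 : 0 < u := hu
    have hE : 1 < Real.exp u := Real.one_lt_exp_iff.mpr hu0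
    have hne : Real.exp u - 1 ≠ 0 := by linarith
    have hd : HasDerivAt (fun u : ℝ => u + 2*u/(Real.exp u - 1))
        (1 + (2*(Real.exp u - 1) - 2*u*Real.exp u)/(Real.exp u - 1)^2) u := by
      have h1 : HasDerivAt (fun u : ℝ => 2*u) 2 u := by
        simpa using (hasDerivAt_id u).const_mul 2
      have h2 : HasDerivAt (fun u : ℝ => Real.exp u - 1) (Real.exp u) u := by
        simpa using (Real.hasDerivAt_exp u).sub_const 1
      have h3 := (h1.div h2 hne)
      have h4 := (hasDerivAt_id u).add h3
      exact h4
    rw [hd.deriv]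
    have hsinh : u < Real.sinh u := Real.self_lt_sinh_iff.mpr hu0
    rw [Real.sinh_eq] at hsinh
    have hexp : Real.exp (-u) = (Real.exp u)⁻¹ := Real.exp_neg u
    rw [hexp] at hsinh
    have hkey : 2*u*Real.exp u < (Real.exp u)^2 - 1 := by
      have h0 : 0 < Real.exp u := Real.exp_pos u
      have h1 := (lt_div_iff₀ (show (0:ℝ) < 2 by norm_num)).mp hsinh
      have h3 : (Real.exp u)⁻¹ * Real.exp u = 1 := inv_mul_cancel₀ h0.ne'
      nlinarith [mul_lt_mul_of_pos_right h1 h0, h3]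
    have hD : 0 < (Real.exp u - 1)^2 := by positivity
    have : -1 < (2*(Real.exp u - 1) - 2*u*Real.exp u)/(Real.exp u - 1)^2 := by
      rw [lt_div_iff₀ hD]
      nlinarith
    linarith




-- numeric: for all r > 9.549, 2 log r < r / e + 1
lemma aux_num {r : ℝ} (hr : 9.549 < r) : 2 * Real.log r < r / Real.exp 1 + 1 := by
  have hr0 : (0:ℝ) < 9.549 := by norm_num
  have hlog : Real.log 9.549 < 2.256437 := by
    rw [Real.log_lt_iff_lt_exp (by norm_num)]
    have h := Real.sum_le_exp_of_nonneg (show (0:ℝ) ≤ 2.256437 by norm_num) 15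
    refine lt_of_lt_of_le ?_ h
    simp only [Finset.sum_range_succ, Finset.sum_range_zero]
    norm_num [Nat.factorial]
  have he : Real.exp 1 < 2.7182818286 := Real.exp_one_lt_d9
  have he0 : 0 < Real.exp 1 := Real.exp_pos 1
  -- log r ≤ log 9.549 + (r/9.549 - 1)
  have hconc : Real.log r ≤ Real.log 9.549 + (r / 9.549 - 1) := by
    have h1 : Real.log (r / 9.549) ≤ r / 9.549 - 1 :=
      Real.log_le_sub_one_of_pos (by positivity)
    have h2 : Real.log (r / 9.549) = Real.log r - Real.log 9.549 :=
      Real.log_div (by linarith) (by norm_num)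
    linarith [h2 ▸ h1]
  -- r / 2.7182818286 < r / exp 1
  have hdiv : r / 2.7182818286 < r / Real.exp 1 :=
    div_lt_div_of_pos_left (by linarith) he0 he
  have hthis : 2 * (2.256437:ℝ) + 2 * (r / 9.549 - 1) < r / 2.7182818286 + 1 := by
    rw [div_add' _ _ _ (by norm_num : (2.7182818286:ℝ) ≠ 0)]
    rw [lt_div_iff₀ (by norm_num : (0:ℝ) < 2.7182818286)]
    ring_nf
    norm_num
    linarith
  linarith



/-- For r > 9.549, f(x) = r·x·e^{-x}, and b = f(1): the set
Π = {x ∈ [1,b] : f(x) ∈ [1,b] and f(f(x)) = x} is the singleton {ln r},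
where ln r is the unique fixed point of f on (0,∞). -/
theorem stmt_10 (r : ℝ) (hr : 9.549 < r)
    (f : ℝ → ℝ) (hf : ∀ x, f x = r * x * Real.exp (-x))
    (b : ℝ) (hb : b = f 1) :
    {x : ℝ | x ∈ Set.Icc 1 b ∧ f x ∈ Set.Icc 1 b ∧ f (f x) = x} = {Real.log r} ∧
    (∀ x : ℝ, 0 < x → (f x = x ↔ x = Real.log r)) := by
  have hr0 : (0:ℝ) < r := by linarith
  set L := Real.log r with hLdef
  have hE0 : 0 < Real.exp 1 := Real.exp_pos 1
  have heL : Real.exp L = r := Real.exp_log hr0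
  have hb' : b = r / Real.exp 1 := by
    rw [hb, hf 1, Real.exp_neg]; ring
  have hL2 : 2 < L := by
    rw [hLdef, Real.lt_log_iff_exp_lt hr0]
    have h2 : Real.exp 2 = Real.exp 1 * Real.exp 1 := by
      rw [← Real.exp_add]; norm_num
    nlinarith [Real.exp_one_lt_d9, hE0]
  have hnum : 2 * L < r / Real.exp 1 + 1 := aux_num hr
  have hLb : L ≤ b := by
    rw [hb']
    have h1 : Real.log (r / Real.exp 1) ≤ r / Real.exp 1 - 1 :=
      Real.log_le_sub_one_of_pos (by positivity)
    have h2 : Real.log (r / Real.exp 1) = L - 1 := by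
      rw [Real.log_div hr0.ne' (Real.exp_ne_zero 1), Real.log_exp]
    linarith [h2 ▸ h1]
  have hfL : f L = L := by
    rw [hf, Real.exp_neg, heL]
    field_simp
  have hfix : ∀ x : ℝ, 0 < x → (f x = x ↔ x = L) := by
    intro x hx
    constructor
    · intro h
      rw [hf] at h
      have h1 : (r * Real.exp (-x)) * x = 1 * x := by rw [one_mul]; linear_combination h
      have h2 : r * Real.exp (-x) = 1 := mul_right_cancel₀ hx.ne' h1
      have h3 : Real.exp x = r := by
        rw [Real.exp_neg] at h2
        field_simp at h2
        linarith
      rw [hLdef, ← h3, Real.log_exp]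
    · intro h; rw [h]; exact hfL
  have hkey : ∀ z w : ℝ, 1 ≤ z → z + w = 2 * L → w = z * Real.exp (L - z) → z ≤ w → z = L := by
    intro z w hz1 hsum hw hzw
    have hzL : z ≤ L := by linarith
    rcases eq_or_lt_of_le hzL with h | h
    · exact h
    exfalso
    have hu0 : 0 < L - z := by linarith
    have hU0 : (0:ℝ) < L - 1 := by linarith
    have huU : L - z ≤ L - 1 := by linarith
    have hEu : 1 < Real.exp (L - z) := Real.one_lt_exp_iff.mpr hu0
    have hz : z * (Real.exp (L - z) - 1) = 2 * (L - z) := by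
      have h1 : z + z * Real.exp (L - z) = 2 * L := by rw [← hw]; linarith
      linear_combination h1
    have hzval : z = 2 * (L - z) / (Real.exp (L - z) - 1) := by
      rw [eq_div_iff (by linarith)]; exact hz
    have hmono := (aux_phi_mono.monotoneOn) (Set.mem_Ioi.mpr hu0) (Set.mem_Ioi.mpr hU0) huU
    simp only at hmono
    have hLphi : L = (L - z) + 2 * (L - z) / (Real.exp (L - z) - 1) := by
      rw [← hzval]; ring
    have heL1 : Real.exp (L - 1) = r / Real.exp 1 := by
      rw [Real.exp_sub, heL]
    have hden : 0 < Real.exp (L - 1) - 1 := by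
      have : 1 < Real.exp (L - 1) := Real.one_lt_exp_iff.mpr (by linarith)
      linarith
    have hphiU : (L - 1) + 2 * (L - 1) / (Real.exp (L - 1) - 1) < L := by
      have h2 : 2 * (L - 1) / (Real.exp (L - 1) - 1) < 1 := by
        rw [div_lt_one hden, heL1]
        linarith
      linarith
    rw [← hLphi] at hmono
    linarith
  constructor
  · ext x
    simp only [Set.mem_setOf_eq, Set.mem_singleton_iff, Set.mem_Icc]
    constructor
    · rintro ⟨⟨hx1, hxb⟩, ⟨hy1, hyb⟩, hff⟩
      obtain ⟨y, hy⟩ : ∃ y, f x = y := ⟨f x, rfl⟩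
      rw [hy] at hy1 hyb hff
      have hx0 : (0:ℝ) < x := by linarith
      have hy0 : (0:ℝ) < y := by linarith
      have hyx : y = r * x * Real.exp (-x) := by rw [← hy, hf]
      have hxy : x = r * y * Real.exp (-y) := by rw [← hff, hf]
      have e1 : y * Real.exp x = r * x := by
        rw [hyx, Real.exp_neg]
        field_simp
      have e2 : x * Real.exp y = r * y := by
        rw [hxy, Real.exp_neg]
        field_simp
      have h4 : (y * Real.exp x) * (x * Real.exp y) = (r * x) * (r * y) := by rw [e1, e2]
      have h5 : x * y * (Real.exp x * Real.exp y - r ^ 2) = 0 := by linear_combination h4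
      have hexp : Real.exp (x + y) = r ^ 2 := by
        rcases mul_eq_zero.mp h5 with h | h
        · exfalso; nlinarith
        · rw [Real.exp_add]; linarith
      have hsum : x + y = 2 * L := by
        have h6 := congrArg Real.log hexp
        rw [Real.log_exp, Real.log_pow] at h6
        rw [h6]; push_cast; ring
      have hyx' : y = x * Real.exp (L - x) := by
        rw [Real.exp_sub, heL, hyx, Real.exp_neg]
        field_simp
      have hxy' : x = y * Real.exp (L - y) := by
        rw [Real.exp_sub, heL, hxy, Real.exp_neg]
        field_simp
      rcases le_total x y with hle | hle
      · exact hkey x y hx1 hsum hyx' hle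
      · have h7 := hkey y x hy1 (by linarith) hxy' hle
        linarith
    · intro h
      subst h
      exact ⟨⟨by linarith, hLb⟩, by rw [hfL]; exact ⟨by linarith, hLb⟩, by rw [hfL, hfL]⟩
  · exact hfix
end
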